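/- Let A be a finite abelian group of order N, and let a ∈ A have order d. The trace of a acting on the k-th symmetric power Sym^k of the regular representation of A equals C(N/d + k/d − 1, k/d) if d divides k, and 0 otherwise. -/

import Mathlib

open Finset Multiset

section Aux

lemma trace_lmapDomain_aux {ι : Type} [Fintype ι] [DecidableEq ι] (g : ι → ι) :
    LinearMap.trace ℂ (ι →₀ ℂ) (Finsupp.lmapDomain ℂ ℂ g) =
      ((Finset.univ.filter (fun i => g i = i)).card : ℂ) := by
  rw [LinearMap.trace_eq_matrix_trace ℂ (Finsupp.basisSingleOne), Matrix.trace]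
  simp only [Matrix.diag, LinearMap.toMatrix_apply, Finsupp.basisSingleOne_repr,
    Finsupp.coe_basisSingleOne, Finsupp.lmapDomain_apply, Finsupp.mapDomain_single,
    LinearEquiv.refl_apply, Finsupp.single_apply]
  rw [Finset.card_filter]
  push_cast
  simp [apply_ite]

variable {A : Type} [CommGroup A] [Fintype A] [DecidableEq A] {a : A}

open scoped Classical in
noncomputable def fib (a : A) (q : A ⧸ Subgroup.zpowers a) : Finset A :=
  Finset.univ.filter (fun x => (QuotientGroup.mk x : A ⧸ Subgroup.zpowers a) = q)

lemma mem_fib {q : A ⧸ Subgroup.zpowers a} {x : A} :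
    x ∈ fib a q ↔ (QuotientGroup.mk x : A ⧸ Subgroup.zpowers a) = q := by
  simp [fib]

lemma count_fib (q : A ⧸ Subgroup.zpowers a) (y : A) :
    (fib a q).val.count y =
      if (QuotientGroup.mk y : A ⧸ Subgroup.zpowers a) = q then 1 else 0 := by
  split_ifs with h
  · exact Multiset.count_eq_one_of_mem (fib a q).nodup (mem_fib.2 h)
  · exact Multiset.count_eq_zero.2 (fun hy => h (mem_fib.1 hy))

lemma card_fib (q : A ⧸ Subgroup.zpowers a) : (fib a q).card = orderOf a := by
  obtain ⟨y, rfl⟩ := QuotientGroup.mk_surjective q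
  rw [← Fintype.card_zpowers (x := a), ← Finset.card_univ]
  refine Finset.card_bij'
    (fun x hx => (⟨y⁻¹ * x, by
      have h := (Subgroup.zpowers a).inv_mem (QuotientGroup.eq.1 (mem_fib.1 hx))
      simpa [mul_inv_rev] using h⟩ : Subgroup.zpowers a))
    (fun h _ => y * (h : A)) (fun x hx => Finset.mem_univ _) ?_ ?_ ?_
  · intro h _
    refine mem_fib.2 ?_
    rw [QuotientGroup.eq]
    have h2 := (Subgroup.zpowers a).inv_mem h.2
    simpa [mul_inv_rev] using h2
  · intro x hx; simp
  · intro h _; simp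

lemma count_invariant {m : Multiset A} (hm : m.map (a * ·) = m) {x y : A}
    (hxy : (QuotientGroup.mk x : A ⧸ Subgroup.zpowers a) = QuotientGroup.mk y) :
    m.count x = m.count y := by
  have h1 : ∀ z : A, m.count (a * z) = m.count z := by
    intro z
    conv_lhs => rw [← hm]
    exact Multiset.count_map_eq_count' _ _ (mul_right_injective a) z
  have h2 : ∀ (n : ℤ) (z : A), m.count (a ^ n * z) = m.count z := by
    intro n
    induction n using Int.induction_on with
    | zero => simp
    | succ n ih =>
      intro z
      have e : a ^ ((n : ℤ) + 1) * z = a ^ (n : ℤ) * (a * z) := by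
        rw [zpow_add_one]; group
      rw [e, ih (a * z), h1 z]
    | pred n ih =>
      intro z
      have h1' : m.count z = m.count (a⁻¹ * z) := by
        conv_lhs => rw [show z = a * (a⁻¹ * z) by group, h1]
      have e : a ^ (-(n : ℤ) - 1) * z = a ^ (-(n : ℤ)) * (a⁻¹ * z) := by
        rw [sub_eq_add_neg, zpow_add]; group
      rw [e, ih (a⁻¹ * z), ← h1']
  rw [QuotientGroup.eq] at hxy
  obtain ⟨n, hn⟩ := hxy
  have hn' : a ^ n = x⁻¹ * y := hn
  have hy : y = a ^ n * x := by
    rw [hn', mul_comm x⁻¹ y, mul_assoc, inv_mul_cancel, mul_one]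
  rw [hy, h2]

lemma fixed_size {m : Multiset A} (hm : m.map (a * ·) = m) :
    Multiset.card m =
      orderOf a * ∑ q : A ⧸ Subgroup.zpowers a, m.count q.out := by
  classical
  have hk : Multiset.card m = ∑ x : A, m.count x :=
    (Multiset.sum_count_eq_card (fun x _ => Finset.mem_univ x)).symm
  rw [hk, ← Finset.sum_fiberwise Finset.univ
    (fun x => (QuotientGroup.mk x : A ⧸ Subgroup.zpowers a))
    (fun x => m.count x), Finset.mul_sum]
  apply Finset.sum_congr rfl
  intro q _
  rw [Finset.sum_congr rfl (fun x hx => count_invariant hm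
    ((Finset.mem_filter.1 hx).2.trans (QuotientGroup.out_eq' q).symm)),
    Finset.sum_const, smul_eq_mul]
  congr 1
  exact card_fib q

open scoped Classical in
noncomputable def symToQ (m : Multiset A) : Multiset (A ⧸ Subgroup.zpowers a) :=
  ∑ q : A ⧸ Subgroup.zpowers a, Multiset.replicate (m.count q.out) q

open scoped Classical in
lemma count_symToQ (m : Multiset A) (q : A ⧸ Subgroup.zpowers a) :
    (symToQ (a := a) m).count q = m.count q.out := by
  rw [symToQ, Multiset.count_sum']
  simp [Multiset.count_replicate]

noncomputable def qToSym (a : A) (n : Multiset (A ⧸ Subgroup.zpowers a)) : Multiset A :=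
  n.bind (fun q => (fib a q).val)

open scoped Classical in
lemma indicator_sum (n : Multiset (A ⧸ Subgroup.zpowers a))
    (b : A ⧸ Subgroup.zpowers a) :
    (n.map (fun q => if (b = q) then 1 else 0)).sum = n.count b := by
  induction n using Multiset.induction with
  | empty => simp
  | cons c s ih =>
    rw [Multiset.map_cons, Multiset.sum_cons, ih, Multiset.count_cons]
    by_cases h : b = c <;> simp [h, eq_comm, add_comm]

open scoped Classical in
lemma count_qToSym (n : Multiset (A ⧸ Subgroup.zpowers a)) (y : A) :
    (qToSym a n).count y = n.count (QuotientGroup.mk y) := by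
  rw [qToSym, Multiset.count_bind]
  rw [show (n.map fun q => ((fib a q).val.count y)) =
      n.map (fun q => if ((QuotientGroup.mk y : A ⧸ Subgroup.zpowers a) = q) then 1 else 0) from
    Multiset.map_congr rfl (fun q _ => count_fib q y)]
  exact indicator_sum n _

lemma card_qToSym (n : Multiset (A ⧸ Subgroup.zpowers a)) :
    Multiset.card (qToSym a n) = Multiset.card n * orderOf a := by
  rw [qToSym, Multiset.card_bind,
    show (n.map (Multiset.card ∘ fun q => (fib a q).val)) = n.map (fun _ => orderOf a) from
      Multiset.map_congr rfl (fun q _ => card_fib q),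
    Multiset.map_const', Multiset.sum_replicate, smul_eq_mul]

lemma qToSym_fixed (n : Multiset (A ⧸ Subgroup.zpowers a)) :
    (qToSym a n).map (a * ·) = qToSym a n := by
  classical
  ext y
  have key : (QuotientGroup.mk (a⁻¹ * y) : A ⧸ Subgroup.zpowers a) = QuotientGroup.mk y := by
    rw [QuotientGroup.eq]
    have e : (a⁻¹ * y)⁻¹ * y = a := by
      rw [mul_inv_rev, inv_inv, mul_comm y⁻¹ a, mul_assoc, inv_mul_cancel, mul_one]
    rw [e]; exact Subgroup.mem_zpowers a
  conv_lhs => rw [show y = a * (a⁻¹ * y) by group]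
  rw [Multiset.count_map_eq_count' _ _ (mul_right_injective a), count_qToSym, count_qToSym, key]

lemma card_symToQ {m : Multiset A} (hm : m.map (a * ·) = m) :
    Multiset.card (symToQ (a := a) m) = Multiset.card m / orderOf a := by
  classical
  have h1 : Multiset.card (symToQ (a := a) m) = ∑ q, (symToQ (a := a) m).count q :=
    (Multiset.sum_count_eq_card (fun x _ => Finset.mem_univ x)).symm
  rw [fixed_size hm, Nat.mul_div_cancel_left _ (orderOf_pos a), h1]
  exact Finset.sum_congr rfl fun q _ => count_symToQ m q

open scoped Classical in
lemma fixed_card (a : A) (k : ℕ) :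
    (Finset.univ.filter (fun m : Sym A k => Sym.map (fun x => a * x) m = m)).card =
      if orderOf a ∣ k then
        Fintype.card (Sym (A ⧸ Subgroup.zpowers a) (k / orderOf a)) else 0 := by
  have hcoe : ∀ m : Sym A k, Sym.map (fun x => a * x) m = m ↔
      (m : Multiset A).map (a * ·) = (m : Multiset A) := by
    intro m
    constructor
    · intro h; conv_rhs => rw [← h]
      rw [Sym.coe_map]
    · intro h; apply Sym.coe_injective; rw [Sym.coe_map]; exact h
  split_ifs with hdvd
  · rw [← Finset.card_univ]
    refine Finset.card_bij'
      (fun m hm => (⟨symToQ (a := a) (m : Multiset A), by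
        rw [card_symToQ ((hcoe m).1 (Finset.mem_filter.1 hm).2), Sym.card_coe]⟩ :
        Sym (A ⧸ Subgroup.zpowers a) (k / orderOf a)))
      (fun n _ => (⟨qToSym a (n : Multiset (A ⧸ Subgroup.zpowers a)), by
        rw [card_qToSym, Sym.card_coe, Nat.div_mul_cancel hdvd]⟩ : Sym A k))
      (fun m hm => Finset.mem_univ _) ?_ ?_ ?_
    · intro n _
      refine Finset.mem_filter.2 ⟨Finset.mem_univ _, (hcoe _).2 ?_⟩
      exact qToSym_fixed (n : Multiset (A ⧸ Subgroup.zpowers a))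
    · intro m hm
      have hm' := (hcoe m).1 (Finset.mem_filter.1 hm).2
      apply Sym.coe_injective
      ext y
      change Multiset.count y (qToSym a (symToQ (a := a) (m : Multiset A))) =
        Multiset.count y (m : Multiset A)
      rw [count_qToSym, count_symToQ]
      exact count_invariant hm' (QuotientGroup.out_eq' _)
    · intro n _
      apply Sym.coe_injective
      ext q
      change Multiset.count q (symToQ (a := a) (qToSym a
        (n : Multiset (A ⧸ Subgroup.zpowers a)))) =
        Multiset.count q (n : Multiset (A ⧸ Subgroup.zpowers a))
      rw [count_symToQ, count_qToSym, QuotientGroup.out_eq']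
  · rw [Finset.card_eq_zero, Finset.filter_eq_empty_iff]
    intro m _
    intro hfix
    exact hdvd ⟨∑ q : A ⧸ Subgroup.zpowers a, (m : Multiset A).count q.out,
      (Sym.card_coe (s := m)).symm.trans (fixed_size ((hcoe m).1 hfix))⟩

lemma card_quot (a : A) :
    Fintype.card (A ⧸ Subgroup.zpowers a) = Fintype.card A / orderOf a := by
  classical
  have h := Subgroup.card_eq_card_quotient_mul_card_subgroup (Subgroup.zpowers a)
  simp only [Nat.card_eq_fintype_card, Fintype.card_zpowers] at h
  rw [h, Nat.mul_div_cancel _ (orderOf_pos a)]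

end Aux

/-- Let `A` be a finite abelian group of order `N` and `a ∈ A` an element of order
`d`. The `k`-th symmetric power of the regular representation `ℂ[A]` has as basis the
multisets of `A` of cardinality `k` (i.e., `Sym A k`), on which `a` acts by
translation, i.e., by `Finsupp.lmapDomain ℂ ℂ (Sym.map (a * ·))`. The trace of this
action is `C(N/d + k/d − 1, k/d)` if `d ∣ k`, and `0` otherwise. -/
theorem stmt_18 (A : Type) [CommGroup A] [Fintype A] (k d : ℕ) (a : A)
    (hd : orderOf a = d) :
    LinearMap.trace ℂ (Sym A k →₀ ℂ)
        (Finsupp.lmapDomain ℂ ℂ (Sym.map (fun x => a * x))) =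
      if d ∣ k then (Nat.choose (Fintype.card A / d + k / d - 1) (k / d) : ℂ)
      else 0 := by
  classical
  subst hd
  rw [trace_lmapDomain_aux, fixed_card a k]
  split_ifs with h
  · norm_cast
    rw [Sym.card_sym_eq_choose, card_quot]
  · simp
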